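/- Let k be a field, G a finite group, w a finite-dimensional kG-module, and X any kG-module. Then the coevaluation map coev_X : X → w ⊗_k w* ⊗_k X, x ↦ Σ_i e_i ⊗ e_i* ⊗ x (where (e_i) is a k-basis of w with dual basis (e_i*)), is a kG-linear P(w)-preenvelope of X: its target w ⊗ w* ⊗ X is w-projective, and every kG-homomorphism X → Z into a w-projective module Z factors through coev_X. (The class P(w) is pre-enveloping.) -/

import Mathlib

open CategoryTheory MonoidalCategory Limits

/-- `X` is `w`-projective: `X` is a direct summand of `w ⊗ Y` (diagonal `G`-action)
for some `kG`-module `Y`. -/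
def IsRelProjective {k G : Type} [Field k] [Group G] (w X : Rep k G) : Prop :=
  ∃ (Y : Rep k G) (i : X ⟶ w ⊗ Y) (r : w ⊗ Y ⟶ X), i ≫ r = 𝟙 X

/-- `f` factors through some `w`-projective module. -/
def FactorsThroughRelProj {k G : Type} [Field k] [Group G] (w : Rep k G)
    {X Y : Rep k G} (f : X ⟶ Y) : Prop :=
  ∃ (Z : Rep k G) (g : X ⟶ Z) (h : Z ⟶ Y), IsRelProjective w Z ∧ g ≫ h = f

/-- The coevaluation map `X → w ⊗ w* ⊗ X`, `x ↦ ∑ᵢ eᵢ ⊗ eᵢ* ⊗ x`, as a `k`-linear map. -/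
noncomputable def coevLin {k G : Type} [Field k] [Group G] (w X : Rep k G)
    [FiniteDimensional k w.V] :
    (X.V : Type) →ₗ[k] (((w ⊗ Rep.of w.ρ.dual) ⊗ X).V : Type) :=
  TensorProduct.map (coevaluation k w.V) LinearMap.id ∘ₗ
    (TensorProduct.lid k X.V).symm.toLinearMap

/-! ### Auxiliary raw linear-algebra lemmas -/

open TensorProduct

section Raw
variable {k : Type} [Field k] (V Y : Type) [AddCommGroup V] [Module k V]
  [AddCommGroup Y] [Module k Y] [FiniteDimensional k V]

/-- Raw zigzag map `(V ⊗ V*) ⊗ (V ⊗ Y) → V ⊗ Y`. -/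
noncomputable def epsRaw :
    ((V ⊗[k] Module.Dual k V) ⊗[k] (V ⊗[k] Y)) →ₗ[k] (V ⊗[k] Y) :=
  LinearMap.lTensor V
      ((TensorProduct.lid k Y).toLinearMap ∘ₗ
        LinearMap.rTensor Y (contractLeft k V) ∘ₗ
        (TensorProduct.assoc k (Module.Dual k V) V Y).symm.toLinearMap) ∘ₗ
    (TensorProduct.assoc k V (Module.Dual k V) (V ⊗[k] Y)).toLinearMap

variable {V Y}

omit [FiniteDimensional k V] in
lemma epsRaw_tmul (a : V) (f : Module.Dual k V) (b : V) (y : Y) :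
    epsRaw (k := k) V Y ((a ⊗ₜ[k] f) ⊗ₜ[k] (b ⊗ₜ[k] y)) = a ⊗ₜ[k] (f b • y) := by
  simp [epsRaw]

omit [FiniteDimensional k V] in
lemma epsRaw_comm (ρ : V →ₗ[k] V) (δ : Module.Dual k V →ₗ[k] Module.Dual k V)
    (σ : Y →ₗ[k] Y) (h : ∀ (f : Module.Dual k V) (v : V), (δ f) (ρ v) = f v) :
    epsRaw (k := k) V Y ∘ₗ
        TensorProduct.map (TensorProduct.map ρ δ) (TensorProduct.map ρ σ) =
      TensorProduct.map ρ σ ∘ₗ epsRaw (k := k) V Y := by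
  refine TensorProduct.ext' fun z v => ?_
  simp only [LinearMap.comp_apply, TensorProduct.map_tmul]
  induction z using TensorProduct.induction_on with
  | zero => simp
  | add z₁ z₂ h₁ h₂ => simp only [map_add, TensorProduct.add_tmul, h₁, h₂]
  | tmul a f =>
      induction v using TensorProduct.induction_on with
      | zero => simp
      | add v₁ v₂ h₁ h₂ => simp only [map_add, TensorProduct.tmul_add, h₁, h₂]
      | tmul b y =>
          simp only [TensorProduct.map_tmul, epsRaw_tmul, h, map_smul,
            TensorProduct.tmul_smul]

lemma epsRaw_coev (v : V ⊗[k] Y) :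
    epsRaw (k := k) V Y ((coevaluation k V) 1 ⊗ₜ[k] v) = v := by
  classical
  rw [coevaluation_apply_one]
  induction v using TensorProduct.induction_on with
  | zero => simp
  | add v₁ v₂ h₁ h₂ => simp only [TensorProduct.tmul_add, map_add, h₁, h₂]
  | tmul b y =>
      rw [TensorProduct.sum_tmul, map_sum]
      simp only [epsRaw_tmul]
      have : ∀ i : Module.Basis.ofVectorSpaceIndex k V,
          (Module.Basis.ofVectorSpace k V) i ⊗ₜ[k] ((Module.Basis.ofVectorSpace k V).coord i b • y) =
            ((Module.Basis.ofVectorSpace k V).coord i b • (Module.Basis.ofVectorSpace k V) i) ⊗ₜ[k] y := by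
        intro i; rw [TensorProduct.tmul_smul, TensorProduct.smul_tmul']
      rw [Finset.sum_congr rfl fun i _ => this i, ← TensorProduct.sum_tmul]
      congr 1
      simpa [Module.Basis.coord_apply] using (Module.Basis.ofVectorSpace k V).sum_repr b
end Raw

/-! ### Representation-theoretic layer -/

variable {k G : Type} [Field k] [Group G]

instance fdCoe (w : Rep k G) [FiniteDimensional k w.V] : FiniteDimensional k w := ‹_›

lemma dual_pair_apply (w : Rep k G) (g : G) (f : Module.Dual k w.V) (v : w.V) :
    (w.ρ.dual g f) (w.ρ g v) = f v := by
  show f (w.ρ g⁻¹ (w.ρ g v)) = f v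
  rw [Representation.inv_self_apply]

lemma sum_coord_smul (w : Rep k G) [FiniteDimensional k w.V] (u : w.V) :
    ∑ i, (Module.Basis.ofVectorSpace k w.V).coord i u • (Module.Basis.ofVectorSpace k w.V) i = u := by
  simpa [Module.Basis.coord_apply] using (Module.Basis.ofVectorSpace k w.V).sum_repr u

/-- The element `∑ eᵢ ⊗ eᵢ*` is `G`-invariant. -/
lemma coev_inv (w : Rep k G) [FiniteDimensional k w.V] (g : G) :
    TensorProduct.map (w.ρ g) (w.ρ.dual g) ((coevaluation k w.V) 1) =
      (coevaluation k w.V) 1 := by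
  classical
  set b := Module.Basis.ofVectorSpace k w.V with hb
  have hinj : Function.Injective
      (dualTensorHom k w.V w.V ∘ₗ
        (TensorProduct.comm k w.V (Module.Dual k w.V)).toLinearMap) := by
    intro x y hxy
    apply (TensorProduct.comm k w.V (Module.Dual k w.V)).injective
    apply (dualTensorHomEquivOfBasis (N := w.V) b).injective
    simpa [dualTensorHomEquivOfBasis_apply] using hxy
  apply hinj
  apply LinearMap.ext fun v => ?_
  rw [coevaluation_apply_one]
  simp only [LinearMap.coe_comp, Function.comp_apply, LinearEquiv.coe_coe, map_sum,
    TensorProduct.map_tmul, TensorProduct.comm_tmul, LinearMap.sum_apply, dualTensorHom_apply,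
    ← hb]
  have h1 : ∀ i, (w.ρ.dual g (b.coord i)) v = b.coord i (w.ρ g⁻¹ v) := fun _ => rfl
  calc ∑ i, (w.ρ.dual g (b.coord i)) v • w.ρ g (b i)
      = w.ρ g (∑ i, b.coord i (w.ρ g⁻¹ v) • b i) := by
        rw [map_sum]
        exact Finset.sum_congr rfl fun i _ => by rw [h1, map_smul]
    _ = v := by
        rw [hb, sum_coord_smul]
        simpa using Representation.inv_self_apply w.ρ g⁻¹ v
    _ = ∑ i, b.coord i v • b i := (sum_coord_smul w v).symm

lemma coevLin_apply (w X : Rep k G) [FiniteDimensional k w.V] (x : X.V) :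
    coevLin w X x = (coevaluation k w.V) 1 ⊗ₜ[k] x := rfl

/-- The coevaluation as a morphism in `Rep k G`. -/
noncomputable def ηRep (w X : Rep k G) [FiniteDimensional k w.V] :
    X ⟶ (w ⊗ Rep.of w.ρ.dual) ⊗ X :=
  ConcreteCategory.ofHom <| Representation.IntertwiningMap.mk (coevLin w X) fun g => by
    refine LinearMap.ext fun x => ?_
    show coevLin w X (X.ρ g x) = ((w ⊗ Rep.of w.ρ.dual) ⊗ X).ρ g (coevLin w X x)
    rw [coevLin_apply, coevLin_apply]
    show _ = TensorProduct.map (TensorProduct.map (w.ρ g) (w.ρ.dual g)) (X.ρ g)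
      ((coevaluation k w.V) 1 ⊗ₜ[k] x)
    rw [TensorProduct.map_tmul, coev_inv]

/-- The zigzag map as a morphism in `Rep k G`. -/
noncomputable def εRep (w Y : Rep k G) [FiniteDimensional k w.V] :
    (w ⊗ Rep.of w.ρ.dual) ⊗ (w ⊗ Y) ⟶ w ⊗ Y :=
  ConcreteCategory.ofHom <| Representation.IntertwiningMap.mk (epsRaw (k := k) w.V Y.V) fun g => by
    refine LinearMap.ext fun zv => ?_
    show epsRaw (k := k) w.V Y.V (((w ⊗ Rep.of w.ρ.dual) ⊗ (w ⊗ Y)).ρ g zv) =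
      (w ⊗ Y).ρ g (epsRaw (k := k) w.V Y.V zv)
    have hρ : (((w ⊗ Rep.of w.ρ.dual) ⊗ (w ⊗ Y)).ρ g : _ →ₗ[k] _) =
        TensorProduct.map (TensorProduct.map (w.ρ g) (w.ρ.dual g))
          (TensorProduct.map (w.ρ g) (Y.ρ g)) := rfl
    have hρ2 : ((w ⊗ Y).ρ g : _ →ₗ[k] _) = TensorProduct.map (w.ρ g) (Y.ρ g) := rfl
    rw [hρ, hρ2]
    exact LinearMap.congr_fun (epsRaw_comm (w.ρ g) (w.ρ.dual g) (Y.ρ g)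
      (dual_pair_apply w g)) zv

/-- Zigzag identity: `η_{w ⊗ Y} ≫ ε = 𝟙`. -/
lemma eta_eps (w Y : Rep k G) [FiniteDimensional k w.V] :
    ηRep w (w ⊗ Y) ≫ εRep w Y = 𝟙 (w ⊗ Y) := by
  refine Rep.hom_ext (Representation.IntertwiningMap.ext ?_)
  refine LinearMap.ext fun v => ?_
  show epsRaw (k := k) w.V Y.V (coevLin w (w ⊗ Y) v) = v
  rw [coevLin_apply]
  exact epsRaw_coev (k := k) (V := w.V) (Y := Y.V) v

/-- Naturality of `η`. -/
lemma eta_nat (w : Rep k G) [FiniteDimensional k w.V] {X Z : Rep k G} (h : X ⟶ Z) :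
    ηRep w X ≫ ((w ⊗ Rep.of w.ρ.dual) ◁ h) = h ≫ ηRep w Z := by
  refine Rep.hom_ext (Representation.IntertwiningMap.ext ?_)
  refine LinearMap.ext fun x => ?_
  show ((w ⊗ Rep.of w.ρ.dual) ◁ h).hom (coevLin w X x) = coevLin w Z (h.hom x)
  rw [coevLin_apply, coevLin_apply]
  rfl

/-- The coevaluation map `coev_X : X → w ⊗ w* ⊗ X` is a `kG`-linear `P(w)`-preenvelope
of `X`: it is `G`-equivariant, its target is `w`-projective, and every `kG`-homomorphism
from `X` into a `w`-projective module `Z` factors through it. -/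
theorem coevaluation_is_preenvelope (k G : Type) [Field k] [Group G] [Fintype G]
    (w : Rep k G) [FiniteDimensional k w.V] (X : Rep k G) :
    ∃ η : X ⟶ (w ⊗ Rep.of w.ρ.dual) ⊗ X,
      η.hom = coevLin w X ∧
      IsRelProjective w ((w ⊗ Rep.of w.ρ.dual) ⊗ X) ∧
      ∀ (Z : Rep k G), IsRelProjective w Z →
        ∀ f : X ⟶ Z, ∃ g : (w ⊗ Rep.of w.ρ.dual) ⊗ X ⟶ Z, η ≫ g = f := by
  refine ⟨ηRep w X, rfl, ?_, ?_⟩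
  · exact ⟨Rep.of w.ρ.dual ⊗ X, (α_ w (Rep.of w.ρ.dual) X).hom,
      (α_ w (Rep.of w.ρ.dual) X).inv, (α_ w (Rep.of w.ρ.dual) X).hom_inv_id⟩
  · rintro Z ⟨Y, i, r, hir⟩ f
    refine ⟨((w ⊗ Rep.of w.ρ.dual) ◁ (f ≫ i)) ≫ εRep w Y ≫ r, ?_⟩
    rw [← Category.assoc, eta_nat w (f ≫ i), Category.assoc, ← Category.assoc (ηRep w (w ⊗ Y)),
      eta_eps, Category.id_comp, Category.assoc, hir, Category.comp_id]
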